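/- Let ε*_N = (ε*_1,…,ε*_N) be a rejective sampling scheme of size n on {1,…,N} with canonical parameter p ∈ (0,1)^N, Σ p_i = n, and first-order inclusion probabilities π_i = P{ε*_i = 1} ∈ (0,1]. Let x_1,…,x_N be fixed real numbers, not all zero, and set A = Σ_{i=1}^N ((1−π_i)/π_i) x_i², B = max_{1≤i≤N} |x_i|/π_i, and Ŝ_π = Σ_{i=1}^N (ε*_i/π_i) x_i. Then for every t ≥ 0 and every N ≥ 1, P{ Ŝ_π − S_N ≥ t } ≤ 2 exp( −(A/B²) · H( Bt/(2A) ) ) ≤ 2 exp( −(t²/4) / ( (2/3)Bt + 2A ) ), where H(x) = (1+x)log(1+x) − x. -/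

import Mathlib

open MeasureTheory ProbabilityTheory Real Finset

/-- `H(x) = (1+x)log(1+x) - x`. -/
noncomputable def entH (x : ℝ) : ℝ := (1 + x) * Real.log (1 + x) - x
/-- The (unnormalized) weight of a sample `s` under Poisson weights `p`. -/
noncomputable def rejWeight {N : ℕ} (p : Fin N → ℝ) (s : Finset (Fin N)) : ℝ :=
  (∏ i ∈ s, p i) * ∏ i ∈ sᶜ, (1 - p i)

/-- `ε` is a rejective (conditional Poisson) sampling scheme of size `n` with
canonical parameter `p`: it is a `{0,1}`-valued random vector whose law puts, on each
subset `s` of cardinality `n`, probability proportional to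
`∏_{i∈s} p i * ∏_{i∉s} (1 - p i)`, and zero probability elsewhere. -/
def IsRejective {Ω : Type*} [MeasurableSpace Ω] (μ : Measure Ω) {N : ℕ} (n : ℕ)
    (p : Fin N → ℝ) (ε : Ω → Fin N → ℝ) : Prop :=
  (∀ ω i, ε ω i = 0 ∨ ε ω i = 1) ∧
  (∀ i, Measurable fun ω => ε ω i) ∧
  ∀ s : Finset (Fin N),
    μ {ω | ∀ i, ε ω i = if i ∈ s then 1 else 0} =
      if s.card = n then
        ENNReal.ofReal
          (rejWeight p s /
            ∑ u ∈ Finset.univ.filter (fun u : Finset (Fin N) => u.card = n), rejWeight p u)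
      else 0

set_option linter.unusedSectionVars false
set_option linter.unusedVariables false

section CalcLemmas

lemma quadmono : Monotone (fun y : ℝ => Real.exp y - 1 - y - y^2/2) := by
  apply monotone_of_deriv_nonneg
  · fun_prop
  · intro y
    have h : HasDerivAt (fun y : ℝ => Real.exp y - 1 - y - y^2/2)
        (Real.exp y - 1 - (2:ℕ) * y ^ (2-1) / 2) y :=
      (((Real.hasDerivAt_exp y).sub_const 1).sub (hasDerivAt_id y)).sub
        ((hasDerivAt_pow 2 y).div_const 2)
    rw [h.deriv]
    have := Real.add_one_le_exp y
    norm_num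
    nlinarith

lemma exp_le_quad {y : ℝ} (hy : y ≤ 0) : Real.exp y ≤ 1 + y + y^2/2 := by
  have := quadmono hy
  simp only [Real.exp_zero] at this
  nlinarith

lemma quad_le_exp {y : ℝ} (hy : 0 ≤ y) : 1 + y + y^2/2 ≤ Real.exp y := by
  have := quadmono hy
  simp only [Real.exp_zero] at this
  nlinarith

lemma psimono : Monotone (fun t : ℝ => t * Real.exp t + t - 2 * Real.exp t + 2) := by
  apply monotone_of_deriv_nonneg
  · fun_prop
  · intro t
    have h : HasDerivAt (fun t : ℝ => t * Real.exp t + t - 2 * Real.exp t + 2)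
        (1 * Real.exp t + t * Real.exp t + 1 - 2 * Real.exp t) t :=
      ((((hasDerivAt_id t).mul (Real.hasDerivAt_exp t)).add (hasDerivAt_id t)).sub
        ((Real.hasDerivAt_exp t).const_mul 2)).add_const 2
    rw [h.deriv]
    have h1 := Real.add_one_le_exp (-t)
    have h2 := Real.exp_pos t
    have h3 : Real.exp (-t) * Real.exp t = 1 := by
      rw [← Real.exp_add]; simp
    nlinarith

lemma psi_nonneg {t : ℝ} (ht : 0 ≤ t) : 0 ≤ t * Real.exp t + t - 2 * Real.exp t + 2 := by
  have := psimono ht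
  simp only [Real.exp_zero] at this
  nlinarith
lemma hmono : MonotoneOn (fun t : ℝ => (Real.exp t - 1 - t) / t^2) (Set.Ioi 0) := by
  apply monotoneOn_of_deriv_nonneg (convex_Ioi 0)
  · apply ContinuousOn.div
    · fun_prop
    · fun_prop
    · intro t ht; have : (0:ℝ) < t := ht; positivity
  · rw [interior_Ioi]
    intro t ht
    apply DifferentiableAt.differentiableWithinAt
    apply DifferentiableAt.div
    · fun_prop
    · fun_prop
    · have : (0:ℝ) < t := ht
      positivity
  · rw [interior_Ioi]
    intro t ht
    have ht' : (0:ℝ) < t := ht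
    have h : HasDerivAt (fun t : ℝ => (Real.exp t - 1 - t) / t^2)
        (((Real.exp t - 1) * t^2 - (Real.exp t - 1 - t) * ((2:ℕ) * t ^ (2-1))) / (t^2)^2) t := by
      exact (((Real.hasDerivAt_exp t).sub_const 1).sub (hasDerivAt_id t)).div
        (hasDerivAt_pow 2 t) (by positivity)
    rw [h.deriv]
    have hψ := psi_nonneg ht'.le
    have h4 : (0:ℝ) < t^4 := by positivity
    rw [div_nonneg_iff]
    left
    constructor
    · norm_num; nlinarith
    · positivity

lemma phi_ratio {z v : ℝ} (hzv : z ≤ v) (hv : 0 < v) :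
    (Real.exp z - 1 - z) * v^2 ≤ z^2 * (Real.exp v - 1 - v) := by
  rcases le_or_gt z 0 with hz | hz
  · have h1 := exp_le_quad hz
    have h2 := quad_le_exp hv.le
    nlinarith [sq_nonneg z, sq_nonneg v, mul_nonneg (sq_nonneg z) (sq_nonneg v)]
  · have := hmono (Set.mem_Ioi.2 hz) (Set.mem_Ioi.2 hv) hzv
    have hz2 : (0:ℝ) < z^2 := by positivity
    have hv2 : (0:ℝ) < v^2 := by positivity
    rw [div_le_div_iff₀ hz2 hv2] at this
    nlinarith


lemma log_ge_one_sub_inv {w : ℝ} (hw : 0 < w) : 1 - 1/w ≤ Real.log w := by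
  have h := Real.log_le_sub_one_of_pos (show (0:ℝ) < w⁻¹ by positivity)
  rw [Real.log_inv] at h
  have : (1:ℝ)/w = w⁻¹ := one_div w
  linarith [h, this ▸ le_refl (1/w)]

lemma gmono : MonotoneOn (fun u : ℝ => (8+4*u) * Real.log (1+u) - 8*u) (Set.Ici 0) := by
  apply monotoneOn_of_deriv_nonneg (convex_Ici 0)
  · apply ContinuousOn.sub
    · apply ContinuousOn.mul (by fun_prop)
      apply ContinuousOn.log (by fun_prop)
      intro u hu; have : (0:ℝ) ≤ u := hu; positivity
    · fun_prop
  · rw [interior_Ici]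
    intro u hu
    have hu' : (0:ℝ) < u := hu
    apply DifferentiableAt.differentiableWithinAt
    apply DifferentiableAt.sub
    · apply DifferentiableAt.mul (by fun_prop)
      apply DifferentiableAt.log (by fun_prop)
      positivity
    · fun_prop
  · rw [interior_Ici]
    intro u hu
    have hu' : (0:ℝ) < u := hu
    have h1u : (0:ℝ) < 1 + u := by linarith
    have h : HasDerivAt (fun u : ℝ => (8+4*u) * Real.log (1+u) - 8*u)
        ((0 + 4*1) * Real.log (1+u) + (8+4*u) * ((0+1)/(1+u)) - 8*1) u := by
      apply HasDerivAt.sub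
      · exact (((hasDerivAt_const u (8:ℝ)).add ((hasDerivAt_id u).const_mul 4)).mul
          (((hasDerivAt_const u (1:ℝ)).add (hasDerivAt_id u)).log h1u.ne'))
      · exact (hasDerivAt_id u).const_mul 8
    rw [h.deriv]
    have hlog := log_ge_one_sub_inv h1u
    have hinv : 1/(1+u) ≤ 1 := by rw [div_le_one h1u]; linarith
    have e1 : (8+4*u) * ((0+1)/(1+u)) = (8+4*u)/(1+u) := by ring
    have : 4 * (1 - 1/(1+u)) + (8+4*u)/(1+u) - 8 = 0 := by
      field_simp
      ring
    nlinarith [mul_le_mul_of_nonneg_left hlog (show (0:ℝ) ≤ 4 by norm_num)]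

lemma g_nonneg {u : ℝ} (hu : 0 ≤ u) : 0 ≤ (8+4*u) * Real.log (1+u) - 8*u := by
  have := gmono (Set.mem_Ici.2 le_rfl) (Set.mem_Ici.2 hu) hu
  simp only [add_zero, mul_zero, Real.log_one] at this
  nlinarith [this]

lemma fmono : MonotoneOn (fun u : ℝ => (6+2*u) * ((1+u) * Real.log (1+u) - u) - 3*u^2) (Set.Ici 0) := by
  apply monotoneOn_of_deriv_nonneg (convex_Ici 0)
  · apply ContinuousOn.sub
    · apply ContinuousOn.mul (by fun_prop)
      apply ContinuousOn.sub _ (by fun_prop)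
      apply ContinuousOn.mul (by fun_prop)
      apply ContinuousOn.log (by fun_prop)
      intro u hu; have : (0:ℝ) ≤ u := hu; positivity
    · fun_prop
  · rw [interior_Ici]
    intro u hu
    have hu' : (0:ℝ) < u := hu
    apply DifferentiableAt.differentiableWithinAt
    apply DifferentiableAt.sub _ (by fun_prop)
    apply DifferentiableAt.mul (by fun_prop)
    apply DifferentiableAt.sub _ (by fun_prop)
    apply DifferentiableAt.mul (by fun_prop)
    apply DifferentiableAt.log (by fun_prop)
    positivity
  · rw [interior_Ici]
    intro u hu
    have hu' : (0:ℝ) < u := hu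
    have h1u : (0:ℝ) < 1 + u := by linarith
    have hL : HasDerivAt (fun u : ℝ => (1+u) * Real.log (1+u) - u)
        ((0+1) * Real.log (1+u) + (1+u) * ((0+1)/(1+u)) - 1) u := by
      apply HasDerivAt.sub
      · exact ((hasDerivAt_const u (1:ℝ)).add (hasDerivAt_id u)).mul
          (((hasDerivAt_const u (1:ℝ)).add (hasDerivAt_id u)).log h1u.ne')
      · exact hasDerivAt_id u
    have h : HasDerivAt (fun u : ℝ => (6+2*u) * ((1+u) * Real.log (1+u) - u) - 3*u^2)
        ((0+2*1) * ((1+u) * Real.log (1+u) - u) +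
          (6+2*u) * ((0+1) * Real.log (1+u) + (1+u) * ((0+1)/(1+u)) - 1)
          - 3 * ((2:ℕ) * u^(2-1))) u := by
      apply HasDerivAt.sub
      · exact ((hasDerivAt_const u (6:ℝ)).add ((hasDerivAt_id u).const_mul 2)).mul hL
      · exact (hasDerivAt_pow 2 u).const_mul 3
    rw [h.deriv]
    have key := g_nonneg hu'.le
    have e : (1+u) * ((0+1)/(1+u)) = 1 := by field_simp; norm_num
    rw [e]
    norm_num
    nlinarith [key]

lemma entH_key {u : ℝ} (hu : 0 ≤ u) : 3*u^2 ≤ (6+2*u) * entH u := by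
  have := fmono (Set.mem_Ici.2 le_rfl) (Set.mem_Ici.2 hu) hu
  simp only [add_zero, mul_zero, Real.log_one, mul_one] at this
  unfold entH
  nlinarith [this]

lemma entH_nonneg {u : ℝ} (hu : 0 ≤ u) : 0 ≤ entH u := by
  have := entH_key hu
  nlinarith [sq_nonneg u]
lemma bern_mgf {pi c B l : ℝ} (hp0 : 0 ≤ pi) (hp1 : pi ≤ 1) (hc : 0 ≤ c) (hcB : c ≤ B)
    (hB : 0 < B) (hl : 0 ≤ l) :
    pi * Real.exp (l*c*(1-pi)) + (1-pi) * Real.exp (-(l*c*pi))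
      ≤ Real.exp (pi*(1-pi)*c^2*(Real.exp (l*B) - 1 - l*B)/B^2) := by
  have hφ : 0 ≤ Real.exp (l*B) - 1 - l*B := by
    have := Real.add_one_le_exp (l*B); linarith
  have h1p : (0:ℝ) ≤ 1 - pi := by linarith
  have hEnn : 0 ≤ pi*(1-pi)*c^2*(Real.exp (l*B) - 1 - l*B)/B^2 :=
    div_nonneg (mul_nonneg (mul_nonneg (mul_nonneg hp0 h1p) (sq_nonneg c)) hφ) (sq_nonneg B)
  rcases eq_or_lt_of_le (mul_nonneg hl hc) with h0 | hlc
  · -- l*c = 0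
    have h1 : l*c*(1-pi) = 0 := by rw [← h0]; ring
    have h2 : l*c*pi = 0 := by rw [← h0]; ring
    rw [h1, h2, neg_zero, Real.exp_zero, mul_one, mul_one]
    have := Real.add_one_le_exp (pi*(1-pi)*c^2*(Real.exp (l*B) - 1 - l*B)/B^2)
    linarith
  · have hl' : 0 < l := by
      rcases lt_or_eq_of_le hl with h | h; · exact h
      · exfalso; rw [← h] at hlc; simp at hlc
    have hc' : 0 < c := by nlinarith
    have hv : 0 < l*B := by positivity
    have hv2 : (0:ℝ) < (l*B)^2 := by positivity
    set φ := Real.exp (l*B) - 1 - l*B with hφdef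
    set D := φ/(l*B)^2 with hDdef
    have hDm : D * (l*B)^2 = φ := div_mul_cancel₀ _ hv2.ne'
    have hz1v : l*c*(1-pi) ≤ l*B := by nlinarith
    have hz2v : -(l*c*pi) ≤ l*B := by nlinarith
    have h1 : Real.exp (l*c*(1-pi)) ≤ 1 + l*c*(1-pi) + (l*c*(1-pi))^2 * D := by
      have := phi_ratio hz1v hv
      nlinarith [this, hDm, hv2]
    have h2 : Real.exp (-(l*c*pi)) ≤ 1 + (-(l*c*pi)) + (l*c*pi)^2 * D := by
      have := phi_ratio hz2v hv
      nlinarith [this, hDm, hv2]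
    have h3 : pi * Real.exp (l*c*(1-pi)) + (1-pi) * Real.exp (-(l*c*pi))
        ≤ 1 + (l^2*c^2*pi*(1-pi))*D := by
      have e1 := mul_le_mul_of_nonneg_left h1 hp0
      have e2 := mul_le_mul_of_nonneg_left h2 (by linarith : (0:ℝ) ≤ 1-pi)
      have hid : pi*(1 + l*c*(1-pi) + (l*c*(1-pi))^2 * D)
          + (1-pi)*(1 + (-(l*c*pi)) + (l*c*pi)^2 * D)
          = 1 + (l^2*c^2*pi*(1-pi))*D := by ring
      linarith
    have h4 : (l^2*c^2*pi*(1-pi))*D = pi*(1-pi)*c^2*φ/B^2 := by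
      rw [hDdef]
      field_simp
    rw [h4] at h3
    calc pi * Real.exp (l*c*(1-pi)) + (1-pi) * Real.exp (-(l*c*pi))
        ≤ 1 + pi*(1-pi)*c^2*φ/B^2 := h3
    _ ≤ Real.exp (pi*(1-pi)*c^2*φ/B^2) := by
        have := Real.add_one_le_exp (pi*(1-pi)*c^2*φ/B^2); linarith

end CalcLemmas

section Esym

variable {ι : Type*} [DecidableEq ι]

noncomputable def es (r : ι → ℝ) (U : Finset ι) (k : ℕ) : ℝ :=
  ∑ A ∈ U.powersetCard k, ∏ i ∈ A, r i

variable {r : ι → ℝ}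

lemma es_zero (U : Finset ι) : es r U 0 = 1 := by
  simp [es, Finset.powersetCard_zero]

lemma es_nonneg (hr : ∀ i, 0 < r i) (U : Finset ι) (k : ℕ) : 0 ≤ es r U k := by
  apply Finset.sum_nonneg
  intro A _
  exact Finset.prod_nonneg fun i _ => (hr i).le

lemma es_eq_zero (U : Finset ι) {k : ℕ} (h : U.card < k) : es r U k = 0 := by
  unfold es
  rw [Finset.powersetCard_eq_empty.2 h, Finset.sum_empty]

lemma es_pos (hr : ∀ i, 0 < r i) (U : Finset ι) {k : ℕ} (h : k ≤ U.card) : 0 < es r U k := by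
  obtain ⟨A, hA, hAcard⟩ := Finset.exists_subset_card_eq h
  apply Finset.sum_pos'
  · intro B _; exact Finset.prod_nonneg fun i _ => (hr i).le
  · exact ⟨A, Finset.mem_powersetCard.2 ⟨hA, hAcard⟩, Finset.prod_pos fun i _ => hr i⟩

lemma es_insert {x : ι} {U : Finset ι} (hx : x ∉ U) (k : ℕ) :
    es r (insert x U) (k+1) = es r U (k+1) + r x * es r U k := by
  unfold es
  rw [Finset.powersetCard_succ_insert hx, Finset.sum_union, Finset.sum_image]
  · congr 1
    rw [Finset.mul_sum]
    apply Finset.sum_congr rfl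
    intro A hA
    rw [Finset.mem_powersetCard] at hA
    rw [Finset.prod_insert (fun hxa => hx (hA.1 hxa))]
  · intro A hA B hB hAB
    rw [Finset.mem_coe, Finset.mem_powersetCard] at hA hB
    have hxA : x ∉ A := fun h => hx (hA.1 h)
    have hxB : x ∉ B := fun h => hx (hB.1 h)
    rw [← Finset.erase_insert hxA, ← Finset.erase_insert hxB, hAB]
  · rw [Finset.disjoint_right]
    rintro A hA hA'
    rw [Finset.mem_image] at hA
    obtain ⟨B, hB, rfl⟩ := hA
    rw [Finset.mem_powersetCard] at hA'
    exact hx (hA'.1 (Finset.mem_insert_self x B))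

lemma es_erase {i : ι} {U : Finset ι} (hi : i ∈ U) (k : ℕ) :
    es r U (k+1) = es r (U.erase i) (k+1) + r i * es r (U.erase i) k := by
  conv_lhs => rw [← Finset.insert_erase hi]
  exact es_insert (Finset.notMem_erase i U) k

lemma newton (hr : ∀ i, 0 < r i) (U : Finset ι) :
    ∀ k, es r U k * es r U (k+2) ≤ es r U (k+1)^2 := by
  classical
  induction U using Finset.induction_on with
  | empty =>
    intro k
    have h2 : es r (∅ : Finset ι) (k+2) = 0 := es_eq_zero _ (by simp)
    rw [h2, mul_zero]
    positivity
  | @insert x U hx IH =>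
    -- first derive Q from IH
    have Q : ∀ k, es r U (k+3) * es r U k ≤ es r U (k+2) * es r U (k+1) := by
      intro k
      rcases le_or_gt (k+3) U.card with h | h
      · have p1 := IH (k+1)
        have p0 := IH k
        have e1 : 0 < es r U (k+1) := es_pos hr U (by omega)
        have e2 : 0 < es r U (k+2) := es_pos hr U (by omega)
        have e0 : 0 ≤ es r U k := es_nonneg hr U k
        have e3 : 0 ≤ es r U (k+3) := es_nonneg hr U (k+3)
        nlinarith [mul_le_mul p1 p0 (mul_nonneg e0 e2.le) (sq_nonneg _)]
      · rw [es_eq_zero U h, zero_mul]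
        exact mul_nonneg (es_nonneg hr U _) (es_nonneg hr U _)
    intro k
    have hrx := hr x
    match k with
    | 0 =>
      rw [es_zero, one_mul]
      have h2 : es r (insert x U) 2 = es r U 2 + r x * es r U 1 := es_insert hx 1
      have h1 : es r (insert x U) 1 = es r U 1 + r x * es r U 0 := es_insert hx 0
      rw [h2, h1, es_zero]
      have i0 := IH 0
      rw [es_zero, one_mul] at i0
      nlinarith [es_nonneg hr U 1]
    | (m+1) =>
      rw [es_insert hx m, es_insert hx (m+2), es_insert hx (m+1)]
      have pm1 := IH (m+1)
      have pm := IH m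
      have qm := Q m
      have n0 := es_nonneg hr U m
      have n1 := es_nonneg hr U (m+1)
      have n2 := es_nonneg hr U (m+2)
      have n3 := es_nonneg hr U (m+3)
      nlinarith [mul_le_mul_of_nonneg_left qm hrx.le,
        mul_le_mul_of_nonneg_left pm (mul_nonneg hrx.le hrx.le)]

lemma pair_incl (hr : ∀ i, 0 < r i) {i j : ι} {U : Finset ι} (hi : i ∈ U) (hj : j ∈ U)
    (hij : i ≠ j) (n : ℕ) :
    es r U (n+2) * es r ((U.erase j).erase i) n
      ≤ es r (U.erase j) (n+1) * es r (U.erase i) (n+1) := by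
  set V := (U.erase j).erase i with hV
  have hij' : i ∈ U.erase j := Finset.mem_erase.2 ⟨hij, hi⟩
  have hji' : j ∈ U.erase i := Finset.mem_erase.2 ⟨hij.symm, hj⟩
  have hcomm : (U.erase i).erase j = V := by rw [hV, Finset.erase_right_comm]
  have e1 : es r (U.erase j) (n+1) = es r V (n+1) + r i * es r V n := es_erase hij' n
  have e2 : es r (U.erase i) (n+1) = es r V (n+1) + r j * es r V n := by
    rw [← hcomm]; exact es_erase hji' n
  have e3 : es r U (n+2) = es r (U.erase j) (n+2) + r j * es r (U.erase j) (n+1) :=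
    es_erase hj (n+1)
  have e4 : es r (U.erase j) (n+2) = es r V (n+2) + r i * es r V (n+1) := es_erase hij' (n+1)
  rw [e1, e2, e3, e4, e1]
  have hnewt := newton hr V n
  have n0 := es_nonneg hr V n
  have n1 := es_nonneg hr V (n+1)
  have n2 := es_nonneg hr V (n+2)
  nlinarith [mul_nonneg (mul_nonneg (hr i).le (hr j).le) (sq_nonneg (es r V n)), (hr i).le, (hr j).le]

lemma pair_excl (hr : ∀ i, 0 < r i) {i j : ι} {U : Finset ι} (hi : i ∈ U) (hj : j ∈ U)
    (hij : i ≠ j) (n : ℕ) :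
    es r U n * es r ((U.erase j).erase i) n
      ≤ es r (U.erase j) n * es r (U.erase i) n := by
  set V := (U.erase j).erase i with hV
  have hij' : i ∈ U.erase j := Finset.mem_erase.2 ⟨hij, hi⟩
  have hji' : j ∈ U.erase i := Finset.mem_erase.2 ⟨hij.symm, hj⟩
  have hcomm : (U.erase i).erase j = V := by rw [hV, Finset.erase_right_comm]
  match n with
  | 0 => simp [es_zero]
  | 1 =>
    have e1 : es r (U.erase j) 1 = es r V 1 + r i * es r V 0 := es_erase hij' 0
    have e2 : es r (U.erase i) 1 = es r V 1 + r j * es r V 0 := by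
      rw [← hcomm]; exact es_erase hji' 0
    have e3 : es r U 1 = es r (U.erase j) 1 + r j * es r (U.erase j) 0 := es_erase hj 0
    rw [es_zero] at e1 e2 e3
    rw [e1, e2, e3, e1]
    nlinarith [mul_pos (hr i) (hr j), es_nonneg hr V 1]
  | (m+2) =>
    have e1 : es r (U.erase j) (m+2) = es r V (m+2) + r i * es r V (m+1) := es_erase hij' (m+1)
    have e2 : es r (U.erase i) (m+2) = es r V (m+2) + r j * es r V (m+1) := by
      rw [← hcomm]; exact es_erase hji' (m+1)
    have e3 : es r U (m+2) = es r (U.erase j) (m+2) + r j * es r (U.erase j) (m+1) :=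
      es_erase hj (m+1)
    have e4 : es r (U.erase j) (m+1) = es r V (m+1) + r i * es r V m := es_erase hij' m
    rw [e1, e2, e3, e1, e4]
    have hnewt := newton hr V m
    have n0 := es_nonneg hr V m
    have n1 := es_nonneg hr V (m+1)
    have n2 := es_nonneg hr V (m+2)
    nlinarith [mul_nonneg (hr i).le (hr j).le, (hr i).le, (hr j).le]

lemma main_incl (hr : ∀ i, 0 < r i) (T : Finset ι) (hT : T.Nonempty) :
    ∀ (U : Finset ι) (n : ℕ), T ⊆ U → T.card ≤ n →
    (∏ i ∈ T, r i) * es r (U \ T) (n - T.card) * (es r U n)^(T.card - 1)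
      ≤ ∏ i ∈ T, (r i * es r (U.erase i) (n-1)) := by
  induction hT using Finset.Nonempty.cons_induction with
  | singleton a =>
    intro U n hTU hcard
    simp only [Finset.card_singleton, Finset.prod_singleton]
    norm_num
    rw [show U \ {a} = U.erase a from (Finset.erase_eq U a).symm]
  | cons a T' ha hT' IH =>
    intro U n hTU hcard
    have haU : a ∈ U := hTU (Finset.mem_cons_self a T')
    have hT'U : T' ⊆ U := fun i hi => hTU (Finset.subset_cons ha hi)
    have hm1 : 1 ≤ T'.card := Finset.card_pos.2 hT'
    set m := T'.card with hm
    have hcards : (Finset.cons a T' ha).card = m + 1 := Finset.card_cons ha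
    rw [hcards] at hcard ⊢
    obtain ⟨k, rfl⟩ : ∃ k, n = k + 2 := ⟨n - 2, by omega⟩
    have hsd : (U.erase a) \ T' = U \ (Finset.cons a T' ha) := by
      ext i
      simp only [Finset.mem_sdiff, Finset.mem_erase, Finset.mem_cons]
      tauto
    have hT'U' : T' ⊆ U.erase a := fun i hi =>
      Finset.mem_erase.2 ⟨fun h => ha (h ▸ hi), hT'U hi⟩
    have hcT : (Finset.cons a T' ha).card ≤ U.card := Finset.card_le_card hTU
    rw [hcards] at hcT
    have hXcard : (U \ Finset.cons a T' ha).card = U.card - (m+1) := by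
      rw [Finset.card_sdiff_of_subset hTU, hcards]
    rcases le_or_gt (k+2) U.card with hUc | hUc
    · -- main case
      have hihyp := IH (U.erase a) (k+1) hT'U' (by omega)
      rw [hsd] at hihyp
      simp only [Nat.add_sub_cancel] at hihyp
      rw [show k + 2 - (m+1) = k+1-m by omega, show k+2-1 = k+1 by omega]
      have hpair : ∀ i ∈ T', es r U (k+2) * es r ((U.erase a).erase i) k
          ≤ es r (U.erase a) (k+1) * es r (U.erase i) (k+1) := by
        intro i hi
        exact pair_incl hr (hT'U hi) haU (fun h => ha (h ▸ hi)) k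
      have hprodpair : ∏ i ∈ T', (es r U (k+2) * es r ((U.erase a).erase i) k)
          ≤ ∏ i ∈ T', (es r (U.erase a) (k+1) * es r (U.erase i) (k+1)) :=
        Finset.prod_le_prod (fun i _ => mul_nonneg (es_nonneg hr _ _) (es_nonneg hr _ _))
          hpair
      rw [Finset.prod_mul_distrib, Finset.prod_mul_distrib, Finset.prod_const,
        Finset.prod_const] at hprodpair
      set P := ∏ i ∈ T', r i with hP
      set X := es r (U \ Finset.cons a T' ha) (k + 1 - m) with hX
      set E := es r U (k+2) with hE
      set F := es r (U.erase a) (k+1) with hF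
      set Y := ∏ i ∈ T', es r ((U.erase a).erase i) k with hY
      set Z := ∏ i ∈ T', es r (U.erase i) (k+1) with hZ
      have hihyp' : P * X * F^(m-1) ≤ P * Y := by
        rw [Finset.prod_mul_distrib] at hihyp
        exact hihyp
      have hPnn : 0 ≤ P := Finset.prod_nonneg fun i _ => (hr i).le
      have hEnn : 0 ≤ E := es_nonneg hr _ _
      have hFpos : 0 < F := es_pos hr _ (by rw [Finset.card_erase_of_mem haU]; omega)
      have hFm : F^m = F^(m-1) * F := by
        conv_lhs => rw [show m = (m-1)+1 by omega]
        rw [pow_succ]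
      have h3 : (P * X * E^m) * F^(m-1) ≤ (F * (P * Z)) * F^(m-1) := by
        calc (P * X * E^m) * F^(m-1) = (P * X * F^(m-1)) * E^m := by ring
        _ ≤ (P * Y) * E^m := mul_le_mul_of_nonneg_right hihyp' (pow_nonneg hEnn m)
        _ = P * (E^m * Y) := by ring
        _ ≤ P * (F^m * Z) := mul_le_mul_of_nonneg_left hprodpair hPnn
        _ = (F * (P * Z)) * F^(m-1) := by rw [hFm]; ring
      have key := le_of_mul_le_mul_right h3 (pow_pos hFpos (m-1))
      rw [Finset.prod_cons, Finset.prod_cons, Finset.prod_mul_distrib]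
      calc (r a * P) * X * E^m = r a * (P * X * E^m) := by ring
      _ ≤ r a * (F * (P * Z)) := mul_le_mul_of_nonneg_left key (hr a).le
      _ = r a * F * (P * Z) := by ring
    · -- degenerate case: left side vanishes
      have hX0 : es r (U \ Finset.cons a T' ha) (k + 2 - (m+1)) = 0 := by
        apply es_eq_zero
        omega
      rw [hX0, mul_zero, zero_mul]
      exact Finset.prod_nonneg fun i _ => mul_nonneg (hr i).le (es_nonneg hr _ _)

lemma main_excl (hr : ∀ i, 0 < r i) (T : Finset ι) (hT : T.Nonempty) :
    ∀ (U : Finset ι) (n : ℕ), T ⊆ U →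
    es r (U \ T) n * (es r U n)^(T.card - 1) ≤ ∏ i ∈ T, es r (U.erase i) n := by
  induction hT using Finset.Nonempty.cons_induction with
  | singleton a =>
    intro U n hTU
    simp only [Finset.card_singleton, Finset.prod_singleton]
    norm_num
    rw [show U \ {a} = U.erase a from (Finset.erase_eq U a).symm]
  | cons a T' ha hT' IH =>
    intro U n hTU
    have haU : a ∈ U := hTU (Finset.mem_cons_self a T')
    have hT'U : T' ⊆ U := fun i hi => hTU (Finset.subset_cons ha hi)
    have hm1 : 1 ≤ T'.card := Finset.card_pos.2 hT'
    set m := T'.card with hm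
    have hcards : (Finset.cons a T' ha).card = m + 1 := Finset.card_cons ha
    rw [hcards]
    have hsd : (U.erase a) \ T' = U \ (Finset.cons a T' ha) := by
      ext i
      simp only [Finset.mem_sdiff, Finset.mem_erase, Finset.mem_cons]
      tauto
    have hT'U' : T' ⊆ U.erase a := fun i hi =>
      Finset.mem_erase.2 ⟨fun h => ha (h ▸ hi), hT'U hi⟩
    have hcT : (Finset.cons a T' ha).card ≤ U.card := Finset.card_le_card hTU
    rw [hcards] at hcT
    have hXcard : (U \ Finset.cons a T' ha).card = U.card - (m+1) := by
      rw [Finset.card_sdiff_of_subset hTU, hcards]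
    have hUea : (U.erase a).card = U.card - 1 := Finset.card_erase_of_mem haU
    rcases le_or_gt n ((U.erase a).card) with hUc | hUc
    · have hihyp := IH (U.erase a) n hT'U'
      rw [hsd] at hihyp
      have hpair : ∀ i ∈ T', es r U n * es r ((U.erase a).erase i) n
          ≤ es r (U.erase a) n * es r (U.erase i) n := by
        intro i hi
        exact pair_excl hr (hT'U hi) haU (fun h => ha (h ▸ hi)) n
      have hprodpair : ∏ i ∈ T', (es r U n * es r ((U.erase a).erase i) n)
          ≤ ∏ i ∈ T', (es r (U.erase a) n * es r (U.erase i) n) :=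
        Finset.prod_le_prod (fun i _ => mul_nonneg (es_nonneg hr _ _) (es_nonneg hr _ _))
          hpair
      rw [Finset.prod_mul_distrib, Finset.prod_mul_distrib, Finset.prod_const,
        Finset.prod_const] at hprodpair
      set X := es r (U \ Finset.cons a T' ha) n with hX
      set E := es r U n with hE
      set F := es r (U.erase a) n with hF
      set Y := ∏ i ∈ T', es r ((U.erase a).erase i) n with hY
      set Z := ∏ i ∈ T', es r (U.erase i) n with hZ
      have hEnn : 0 ≤ E := es_nonneg hr _ _
      have hFpos : 0 < F := es_pos hr _ hUc
      have hFm : F^m = F^(m-1) * F := by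
        conv_lhs => rw [show m = (m-1)+1 by omega]
        rw [pow_succ]
      have h3 : (X * E^m) * F^(m-1) ≤ (F * Z) * F^(m-1) := by
        calc (X * E^m) * F^(m-1) = (X * F^(m-1)) * E^m := by ring
        _ ≤ Y * E^m := mul_le_mul_of_nonneg_right hihyp (pow_nonneg hEnn m)
        _ = E^m * Y := by ring
        _ ≤ F^m * Z := hprodpair
        _ = (F * Z) * F^(m-1) := by rw [hFm]; ring
      have key := le_of_mul_le_mul_right h3 (pow_pos hFpos (m-1))
      rw [Finset.prod_cons]
      exact key
    · have hX0 : es r (U \ Finset.cons a T' ha) n = 0 := by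
        apply es_eq_zero
        omega
      rw [hX0, zero_mul]
      exact Finset.prod_nonneg fun i _ => es_nonneg hr _ _


variable [Fintype ι] {r : ι → ℝ}

lemma sum_incl (T : Finset ι) {n : ℕ} (hT : T.card ≤ n) :
    ∑ s ∈ (Finset.univ.powersetCard n).filter (fun s => T ⊆ s), ∏ i ∈ s, r i
      = (∏ i ∈ T, r i) * es r (Finset.univ \ T) (n - T.card) := by
  rw [es, Finset.mul_sum]
  apply Finset.sum_bij' (i := fun s _ => s \ T) (j := fun A _ => A ∪ T)
  · intro s hs
    rw [Finset.mem_filter, Finset.mem_powersetCard] at hs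
    rw [Finset.mem_powersetCard]
    exact ⟨Finset.sdiff_subset_sdiff hs.1.1 le_rfl,
      by rw [Finset.card_sdiff_of_subset hs.2, hs.1.2]⟩
  · intro A hA
    rw [Finset.mem_powersetCard] at hA
    have hdisj : Disjoint A T := by
      have := hA.1
      rw [Finset.subset_sdiff] at this
      exact this.2
    rw [Finset.mem_filter, Finset.mem_powersetCard]
    refine ⟨⟨Finset.subset_univ _, ?_⟩, Finset.subset_union_right⟩
    rw [Finset.card_union_of_disjoint hdisj, hA.2]
    omega
  · intro s hs
    rw [Finset.mem_filter] at hs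
    exact Finset.sdiff_union_of_subset hs.2
  · intro A hA
    rw [Finset.mem_powersetCard] at hA
    have hdisj : Disjoint A T := by
      have := hA.1
      rw [Finset.subset_sdiff] at this
      exact this.2
    exact Finset.union_sdiff_cancel_right hdisj
  · intro s hs
    rw [Finset.mem_filter] at hs
    rw [← Finset.prod_sdiff hs.2]
    ring

lemma sum_excl (T : Finset ι) (n : ℕ) :
    ∑ s ∈ (Finset.univ.powersetCard n).filter (fun s => Disjoint T s), ∏ i ∈ s, r i
      = es r (Finset.univ \ T) n := by
  rw [es]
  congr 1
  ext s
  simp only [Finset.mem_filter, Finset.mem_powersetCard, Finset.subset_sdiff]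
  constructor
  · rintro ⟨⟨_, hc⟩, hd⟩; exact ⟨⟨Finset.subset_univ s, hd.symm⟩, hc⟩
  · rintro ⟨⟨_, hd⟩, hc⟩; exact ⟨⟨Finset.subset_univ s, hc⟩, hd.symm⟩

lemma incl_moment (hr : ∀ i, 0 < r i) {n : ℕ} (hn1 : 1 ≤ n) (hn : n ≤ (Finset.univ : Finset ι).card)
    (T : Finset ι) :
    ∑ s ∈ (Finset.univ.powersetCard n).filter (fun s => T ⊆ s),
        (∏ i ∈ s, r i) / es r Finset.univ n
      ≤ ∏ i ∈ T, (r i * es r (Finset.univ.erase i) (n-1) / es r Finset.univ n) := by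
  have he : 0 < es r (Finset.univ : Finset ι) n := es_pos hr _ hn
  rcases T.eq_empty_or_nonempty with rfl | hT
  · simp only [Finset.prod_empty]
    rw [← Finset.sum_div]
    rw [Finset.filter_true_of_mem (fun s _ => Finset.empty_subset s)]
    rw [show ∑ s ∈ (Finset.univ : Finset ι).powersetCard n, ∏ i ∈ s, r i
      = es r Finset.univ n from rfl]
    rw [div_self he.ne']
  rcases le_or_gt T.card n with hTn | hTn
  · rw [← Finset.sum_div, sum_incl T hTn, Finset.prod_div_distrib, Finset.prod_const]
    have hmain := main_incl hr T hT Finset.univ n (Finset.subset_univ T) hTn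
    rw [div_le_div_iff₀ he (by positivity)]
    have hm1 : 1 ≤ T.card := Finset.card_pos.2 hT
    calc (∏ i ∈ T, r i) * es r (Finset.univ \ T) (n - T.card) * es r Finset.univ n ^ T.card
        = ((∏ i ∈ T, r i) * es r (Finset.univ \ T) (n - T.card) * es r Finset.univ n ^ (T.card - 1))
            * es r Finset.univ n := by
          rw [mul_assoc, mul_assoc, mul_assoc, ← pow_succ]
          congr 3
          omega
    _ ≤ (∏ i ∈ T, (r i * es r (Finset.univ.erase i) (n-1))) * es r Finset.univ n :=
        mul_le_mul_of_nonneg_right hmain he.le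
  · have hempty : (Finset.univ.powersetCard n).filter (fun s : Finset ι => T ⊆ s) = ∅ := by
      rw [Finset.filter_eq_empty_iff]
      intro s hs hTs
      rw [Finset.mem_powersetCard] at hs
      have := Finset.card_le_card hTs
      omega
    rw [hempty, Finset.sum_empty]
    apply Finset.prod_nonneg
    intro i _
    exact div_nonneg (mul_nonneg (hr i).le (es_nonneg hr _ _)) (es_nonneg hr _ _)

lemma one_sub_pi (hr : ∀ i, 0 < r i) {n : ℕ} (hn1 : 1 ≤ n) (hn : n ≤ (Finset.univ : Finset ι).card)
    (i : ι) :
    1 - r i * es r (Finset.univ.erase i) (n-1) / es r Finset.univ n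
      = es r (Finset.univ.erase i) n / es r Finset.univ n := by
  have he : 0 < es r (Finset.univ : Finset ι) n := es_pos hr _ hn
  have hdec : es r (Finset.univ : Finset ι) n
      = es r (Finset.univ.erase i) n + r i * es r (Finset.univ.erase i) (n-1) := by
    conv_lhs => rw [show n = (n-1)+1 by omega]
    rw [es_erase (Finset.mem_univ i) (n-1)]
    congr 2
    omega
  field_simp
  linarith [hdec]

lemma excl_moment (hr : ∀ i, 0 < r i) {n : ℕ} (hn1 : 1 ≤ n) (hn : n ≤ (Finset.univ : Finset ι).card)
    (T : Finset ι) :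
    ∑ s ∈ (Finset.univ.powersetCard n).filter (fun s => Disjoint T s),
        (∏ i ∈ s, r i) / es r Finset.univ n
      ≤ ∏ i ∈ T, (1 - r i * es r (Finset.univ.erase i) (n-1) / es r Finset.univ n) := by
  have he : 0 < es r (Finset.univ : Finset ι) n := es_pos hr _ hn
  have hrw : ∀ i ∈ T, (1 - r i * es r (Finset.univ.erase i) (n-1) / es r Finset.univ n)
      = es r (Finset.univ.erase i) n / es r Finset.univ n := fun i _ => one_sub_pi hr hn1 hn i
  rw [Finset.prod_congr rfl hrw]
  rcases T.eq_empty_or_nonempty with rfl | hT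
  · simp only [Finset.prod_empty]
    rw [← Finset.sum_div]
    rw [Finset.filter_true_of_mem (fun s _ => Finset.disjoint_empty_left s)]
    rw [show ∑ s ∈ (Finset.univ : Finset ι).powersetCard n, ∏ i ∈ s, r i
      = es r Finset.univ n from rfl]
    rw [div_self he.ne']
  · rw [← Finset.sum_div, sum_excl T n, Finset.prod_div_distrib, Finset.prod_const]
    have hmain := main_excl hr T hT Finset.univ n (Finset.subset_univ T)
    rw [div_le_div_iff₀ he (by positivity)]
    have hm1 : 1 ≤ T.card := Finset.card_pos.2 hT
    calc es r (Finset.univ \ T) n * es r Finset.univ n ^ T.card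
        = (es r (Finset.univ \ T) n * es r Finset.univ n ^ (T.card - 1)) * es r Finset.univ n := by
          rw [mul_assoc, ← pow_succ]
          congr 2
          omega
    _ ≤ (∏ i ∈ T, es r (Finset.univ.erase i) n) * es r Finset.univ n :=
        mul_le_mul_of_nonneg_right hmain he.le

lemma ind_prod (T s : Finset ι) :
    ∏ i ∈ T, (if i ∈ s then (1:ℝ) else 0) = if T ⊆ s then 1 else 0 := by
  by_cases h : T ⊆ s
  · rw [if_pos h]
    apply Finset.prod_eq_one
    intro i hi
    rw [if_pos (h hi)]
  · rw [if_neg h]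
    obtain ⟨i, hiT, his⟩ := Finset.not_subset.1 h
    exact Finset.prod_eq_zero hiT (by rw [if_neg his])

lemma ind_prod' (T s : Finset ι) :
    ∏ i ∈ T, (1 - (if i ∈ s then (1:ℝ) else 0)) = if Disjoint T s then 1 else 0 := by
  have e : ∀ i, 1 - (if i ∈ s then (1:ℝ) else 0) = if i ∉ s then 1 else 0 := by
    intro i; by_cases h : i ∈ s <;> simp [h]
  rw [Finset.prod_congr rfl (fun i _ => e i)]
  by_cases h : Disjoint T s
  · rw [if_pos h]
    apply Finset.prod_eq_one
    intro i hi
    rw [if_pos (Finset.disjoint_left.1 h hi)]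
  · rw [if_neg h]
    rw [Finset.disjoint_left] at h
    push_neg at h
    obtain ⟨i, hiT, his⟩ := h
    refine Finset.prod_eq_zero hiT ?_
    rw [if_neg (by simpa using his)]

lemma prod_affine (P : Finset ι) (u v y : ι → ℝ) :
    ∏ i ∈ P, (u i + v i * y i)
      = ∑ T ∈ P.powerset, ((∏ i ∈ T, (v i * y i)) * ∏ i ∈ P \ T, u i) := by
  rw [show (fun i => u i + v i * y i) = fun i => (v i * y i) + u i by funext i; ring]
  exact Finset.prod_add _ _ P

lemma mgf_incl (hr : ∀ i, 0 < r i) {n : ℕ} (hn1 : 1 ≤ n) (hn : n ≤ (Finset.univ : Finset ι).card)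
    (P : Finset ι) (u v : ι → ℝ) (hu : ∀ i ∈ P, 0 ≤ u i) (hv : ∀ i ∈ P, 0 ≤ v i) :
    ∑ s ∈ Finset.univ.powersetCard n,
        ((∏ i ∈ s, r i) / es r Finset.univ n)
          * ∏ i ∈ P, (u i + v i * (if i ∈ s then (1:ℝ) else 0))
      ≤ ∏ i ∈ P, (u i + v i * (r i * es r (Finset.univ.erase i) (n-1) / es r Finset.univ n)) := by
  have he : 0 < es r (Finset.univ : Finset ι) n := es_pos hr _ hn
  have hw : ∀ T ∈ P.powerset, 0 ≤ (∏ i ∈ T, v i) * ∏ i ∈ P \ T, u i := by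
    intro T hT
    rw [Finset.mem_powerset] at hT
    exact mul_nonneg (Finset.prod_nonneg fun i hi => hv i (hT hi))
      (Finset.prod_nonneg fun i hi => hu i (Finset.mem_sdiff.1 hi).1)
  calc ∑ s ∈ Finset.univ.powersetCard n,
        ((∏ i ∈ s, r i) / es r Finset.univ n)
          * ∏ i ∈ P, (u i + v i * (if i ∈ s then (1:ℝ) else 0))
      = ∑ s ∈ Finset.univ.powersetCard n, ∑ T ∈ P.powerset,
          (if T ⊆ s then ((∏ i ∈ s, r i) / es r Finset.univ n)
            * ((∏ i ∈ T, v i) * ∏ i ∈ P \ T, u i) else 0) := by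
        apply Finset.sum_congr rfl
        intro s _
        rw [prod_affine P u v _, Finset.mul_sum]
        apply Finset.sum_congr rfl
        intro T _
        rw [Finset.prod_mul_distrib, ind_prod T s]
        by_cases h : T ⊆ s
        · rw [if_pos h, if_pos h]; ring
        · rw [if_neg h, if_neg h]; ring
  _ = ∑ T ∈ P.powerset, (∑ s ∈ (Finset.univ.powersetCard n).filter (fun s => T ⊆ s),
        (∏ i ∈ s, r i) / es r Finset.univ n) * ((∏ i ∈ T, v i) * ∏ i ∈ P \ T, u i) := by
        rw [Finset.sum_comm]
        apply Finset.sum_congr rfl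
        intro T _
        rw [Finset.sum_filter, Finset.sum_mul]
        apply Finset.sum_congr rfl
        intro s _
        by_cases h : T ⊆ s
        · rw [if_pos h, if_pos h]
        · rw [if_neg h, if_neg h, zero_mul]
  _ ≤ ∑ T ∈ P.powerset, (∏ i ∈ T, (r i * es r (Finset.univ.erase i) (n-1) / es r Finset.univ n))
        * ((∏ i ∈ T, v i) * ∏ i ∈ P \ T, u i) := by
        apply Finset.sum_le_sum
        intro T hT
        exact mul_le_mul_of_nonneg_right (incl_moment hr hn1 hn T) (hw T hT)
  _ = ∏ i ∈ P, (u i + v i * (r i * es r (Finset.univ.erase i) (n-1) / es r Finset.univ n)) := by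
        rw [prod_affine P u v _]
        apply Finset.sum_congr rfl
        intro T _
        rw [Finset.prod_mul_distrib]
        ring

lemma mgf_excl (hr : ∀ i, 0 < r i) {n : ℕ} (hn1 : 1 ≤ n) (hn : n ≤ (Finset.univ : Finset ι).card)
    (P : Finset ι) (u v : ι → ℝ) (hu : ∀ i ∈ P, 0 ≤ u i) (hv : ∀ i ∈ P, 0 ≤ v i) :
    ∑ s ∈ Finset.univ.powersetCard n,
        ((∏ i ∈ s, r i) / es r Finset.univ n)
          * ∏ i ∈ P, (u i + v i * (1 - (if i ∈ s then (1:ℝ) else 0)))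
      ≤ ∏ i ∈ P, (u i + v i
          * (1 - r i * es r (Finset.univ.erase i) (n-1) / es r Finset.univ n)) := by
  have he : 0 < es r (Finset.univ : Finset ι) n := es_pos hr _ hn
  have hw : ∀ T ∈ P.powerset, 0 ≤ (∏ i ∈ T, v i) * ∏ i ∈ P \ T, u i := by
    intro T hT
    rw [Finset.mem_powerset] at hT
    exact mul_nonneg (Finset.prod_nonneg fun i hi => hv i (hT hi))
      (Finset.prod_nonneg fun i hi => hu i (Finset.mem_sdiff.1 hi).1)
  calc ∑ s ∈ Finset.univ.powersetCard n,
        ((∏ i ∈ s, r i) / es r Finset.univ n)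
          * ∏ i ∈ P, (u i + v i * (1 - (if i ∈ s then (1:ℝ) else 0)))
      = ∑ s ∈ Finset.univ.powersetCard n, ∑ T ∈ P.powerset,
          (if Disjoint T s then ((∏ i ∈ s, r i) / es r Finset.univ n)
            * ((∏ i ∈ T, v i) * ∏ i ∈ P \ T, u i) else 0) := by
        apply Finset.sum_congr rfl
        intro s _
        rw [prod_affine P u v _, Finset.mul_sum]
        apply Finset.sum_congr rfl
        intro T _
        rw [Finset.prod_mul_distrib, ind_prod' T s]
        by_cases h : Disjoint T s
        · rw [if_pos h, if_pos h]; ring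
        · rw [if_neg h, if_neg h]; ring
  _ = ∑ T ∈ P.powerset, (∑ s ∈ (Finset.univ.powersetCard n).filter (fun s => Disjoint T s),
        (∏ i ∈ s, r i) / es r Finset.univ n) * ((∏ i ∈ T, v i) * ∏ i ∈ P \ T, u i) := by
        rw [Finset.sum_comm]
        apply Finset.sum_congr rfl
        intro T _
        rw [Finset.sum_filter, Finset.sum_mul]
        apply Finset.sum_congr rfl
        intro s _
        by_cases h : Disjoint T s
        · rw [if_pos h, if_pos h]
        · rw [if_neg h, if_neg h, zero_mul]
  _ ≤ ∑ T ∈ P.powerset,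
        (∏ i ∈ T, (1 - r i * es r (Finset.univ.erase i) (n-1) / es r Finset.univ n))
        * ((∏ i ∈ T, v i) * ∏ i ∈ P \ T, u i) := by
        apply Finset.sum_le_sum
        intro T hT
        exact mul_le_mul_of_nonneg_right (excl_moment hr hn1 hn T) (hw T hT)
  _ = ∏ i ∈ P, (u i + v i
        * (1 - r i * es r (Finset.univ.erase i) (n-1) / es r Finset.univ n)) := by
        rw [prod_affine P u v _]
        apply Finset.sum_congr rfl
        intro T _
        rw [Finset.prod_mul_distrib]
        ring

end Esym



lemma chernoff_abstract {ι : Type*} [DecidableEq ι] [Fintype ι]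
    (K : Finset (Finset ι)) (q : Finset ι → ℝ) (hq : ∀ s ∈ K, 0 ≤ q s)
    (pi c : ι → ℝ) (P : Finset ι) (X : ι → Finset ι → ℝ)
    (hX : ∀ i s, X i s = 0 ∨ X i s = 1)
    (A B t : ℝ) (hA : 0 < A) (hB : 0 < B) (ht : 0 ≤ t)
    (hpi : ∀ i ∈ P, 0 < pi i ∧ pi i < 1)
    (hc : ∀ i ∈ P, 0 ≤ c i ∧ c i ≤ B)
    (hvar : ∑ i ∈ P, pi i * (1 - pi i) * c i^2 ≤ A)
    (hmgf : ∀ u v : ι → ℝ, (∀ i ∈ P, 0 ≤ u i) → (∀ i ∈ P, 0 ≤ v i) →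
      ∑ s ∈ K, q s * ∏ i ∈ P, (u i + v i * X i s) ≤ ∏ i ∈ P, (u i + v i * pi i)) :
    ∑ s ∈ K.filter (fun s => t/2 ≤ ∑ i ∈ P, c i * (X i s - pi i)), q s
      ≤ Real.exp (-(A/B^2) * entH (B*t/(2*A))) := by
  set uu := B*t/(2*A) with huu
  have huu0 : 0 ≤ uu := by positivity
  set l := Real.log (1 + uu) / B with hl
  have hl0 : 0 ≤ l := div_nonneg (Real.log_nonneg (by linarith)) hB.le
  have hlB : l * B = Real.log (1 + uu) := div_mul_cancel₀ _ hB.ne'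
  have helB : Real.exp (l*B) = 1 + uu := by rw [hlB, Real.exp_log (by linarith)]
  have hphi : 0 ≤ Real.exp (l*B) - 1 - l*B := by
    have := Real.add_one_le_exp (l*B); linarith
  set u : ι → ℝ := fun i => Real.exp (-(l * c i * pi i)) with hudef
  set v : ι → ℝ := fun i => u i * (Real.exp (l * c i) - 1) with hvdef
  have hu : ∀ i ∈ P, 0 ≤ u i := fun i _ => (Real.exp_pos _).le
  have hv : ∀ i ∈ P, 0 ≤ v i := by
    intro i hi
    apply mul_nonneg (Real.exp_pos _).le
    have : (0:ℝ) ≤ l * c i := mul_nonneg hl0 (hc i hi).1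
    have := Real.add_one_le_exp (l * c i)
    linarith
  have hpoint : ∀ (s : Finset ι), ∀ i ∈ P,
      Real.exp (l * (c i * (X i s - pi i))) = u i + v i * X i s := by
    intro s i _
    rcases hX i s with h | h
    · rw [h, show l * (c i * (0 - pi i)) = -(l * c i * pi i) by ring]
      simp [hvdef, hudef]
    · rw [h, show l * (c i * (1 - pi i)) = l * c i + -(l * c i * pi i) by ring,
        Real.exp_add]
      simp only [hvdef, hudef, mul_one]
      ring
  have step1 : ∑ s ∈ K.filter (fun s => t/2 ≤ ∑ i ∈ P, c i * (X i s - pi i)), q s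
      ≤ ∑ s ∈ K, q s * Real.exp (l * ((∑ i ∈ P, c i * (X i s - pi i)) - t/2)) := by
    calc ∑ s ∈ K.filter (fun s => t/2 ≤ ∑ i ∈ P, c i * (X i s - pi i)), q s
        ≤ ∑ s ∈ K.filter (fun s => t/2 ≤ ∑ i ∈ P, c i * (X i s - pi i)),
            q s * Real.exp (l * ((∑ i ∈ P, c i * (X i s - pi i)) - t/2)) := by
          apply Finset.sum_le_sum
          intro s hs
          rw [Finset.mem_filter] at hs
          have h1 : 0 ≤ l * ((∑ i ∈ P, c i * (X i s - pi i)) - t/2) :=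
            mul_nonneg hl0 (by linarith [hs.2])
          have h2 : 1 ≤ Real.exp (l * ((∑ i ∈ P, c i * (X i s - pi i)) - t/2)) := by
            rw [← Real.exp_zero]; exact Real.exp_le_exp.2 h1
          nlinarith [hq s hs.1]
    _ ≤ ∑ s ∈ K, q s * Real.exp (l * ((∑ i ∈ P, c i * (X i s - pi i)) - t/2)) := by
          apply Finset.sum_le_sum_of_subset_of_nonneg (Finset.filter_subset _ _)
          intro s hs _
          exact mul_nonneg (hq s hs) (Real.exp_pos _).le
  have step2 : ∀ s ∈ K, q s * Real.exp (l * ((∑ i ∈ P, c i * (X i s - pi i)) - t/2))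
      = Real.exp (-(l*t/2)) * (q s * ∏ i ∈ P, (u i + v i * X i s)) := by
    intro s _
    have harg : l * ((∑ i ∈ P, c i * (X i s - pi i)) - t/2)
        = (∑ i ∈ P, l * (c i * (X i s - pi i))) + (-(l*t/2)) := by
      rw [← Finset.mul_sum]; ring
    rw [harg, Real.exp_add, Real.exp_sum]
    rw [Finset.prod_congr rfl (hpoint s)]
    ring
  have step3 : ∑ s ∈ K, q s * Real.exp (l * ((∑ i ∈ P, c i * (X i s - pi i)) - t/2))
      ≤ Real.exp (-(l*t/2)) * ∏ i ∈ P, (u i + v i * pi i) := by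
    rw [Finset.sum_congr rfl step2, ← Finset.mul_sum]
    exact mul_le_mul_of_nonneg_left (hmgf u v hu hv) (Real.exp_pos _).le
  have step4 : ∏ i ∈ P, (u i + v i * pi i)
      ≤ Real.exp (A * (Real.exp (l*B) - 1 - l*B) / B^2) := by
    calc ∏ i ∈ P, (u i + v i * pi i)
        ≤ ∏ i ∈ P, Real.exp (pi i*(1-pi i)*(c i)^2*(Real.exp (l*B) - 1 - l*B)/B^2) := by
          apply Finset.prod_le_prod
          · intro i hi
            exact add_nonneg (hu i hi) (mul_nonneg (hv i hi) (hpi i hi).1.le)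
          · intro i hi
            have heq : u i + v i * pi i
                = pi i * Real.exp (l*c i*(1-pi i)) + (1-pi i) * Real.exp (-(l*c i*pi i)) := by
              simp only [hvdef, hudef]
              rw [show l*c i*(1-pi i) = l * c i + -(l * c i * pi i) by ring, Real.exp_add]
              ring
            rw [heq]
            exact bern_mgf (hpi i hi).1.le (hpi i hi).2.le (hc i hi).1 (hc i hi).2 hB hl0
    _ = Real.exp (∑ i ∈ P, pi i*(1-pi i)*(c i)^2*(Real.exp (l*B) - 1 - l*B)/B^2) := by
          rw [Real.exp_sum]
    _ ≤ Real.exp (A * (Real.exp (l*B) - 1 - l*B) / B^2) := by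
          apply Real.exp_le_exp.2
          have : ∑ i ∈ P, pi i*(1-pi i)*(c i)^2*(Real.exp (l*B) - 1 - l*B)/B^2
              = (∑ i ∈ P, pi i*(1-pi i)*(c i)^2) * (Real.exp (l*B) - 1 - l*B)/B^2 := by
            rw [← Finset.sum_div, ← Finset.sum_mul]
          rw [this]
          apply div_le_div_of_nonneg_right _ (by positivity)
          exact mul_le_mul_of_nonneg_right hvar hphi
  have step5 : -(l*t/2) + A * (Real.exp (l*B) - 1 - l*B) / B^2
      = -(A/B^2) * entH uu := by
    have htu : t = 2*A*uu/B := by rw [huu]; field_simp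
    rw [helB, hlB, entH, hl, htu]
    field_simp
    ring
  calc ∑ s ∈ K.filter (fun s => t/2 ≤ ∑ i ∈ P, c i * (X i s - pi i)), q s
      ≤ Real.exp (-(l*t/2)) * ∏ i ∈ P, (u i + v i * pi i) := le_trans step1 step3
  _ ≤ Real.exp (-(l*t/2)) * Real.exp (A * (Real.exp (l*B) - 1 - l*B) / B^2) :=
      mul_le_mul_of_nonneg_left step4 (Real.exp_pos _).le
  _ = Real.exp (-(A/B^2) * entH uu) := by rw [← Real.exp_add, step5]

lemma part2 {A B t : ℝ} (hA : 0 < A) (hB : 0 < B) (ht : 0 ≤ t) :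
    2 * Real.exp (-(A / B ^ 2) * entH (B * t / (2 * A)))
      ≤ 2 * Real.exp (-(t ^ 2 / 4) / ((2 / 3) * B * t + 2 * A)) := by
  have h2 : (0:ℝ) ≤ 2 := by norm_num
  apply mul_le_mul_of_nonneg_left _ h2
  apply Real.exp_le_exp.2
  set w := B * t / (2 * A) with hw
  have hw0 : 0 ≤ w := by positivity
  have key := entH_key hw0
  have hE0 : 0 ≤ entH w := entH_nonneg hw0
  have hD : 0 < (2/3) * B * t + 2 * A := by positivity
  rw [neg_div, neg_mul, neg_le_neg_iff]
  rw [div_le_iff₀ hD]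
  have e1 : w * (2 * A) = B * t := by rw [hw]; field_simp
  have e2 : (B * t)^2 = 4 * A^2 * w^2 := by rw [← e1]; ring
  have hgoal : t^2/4 * B^2 ≤ A * entH w * ((2/3) * B * t + 2 * A) := by
    nlinarith [mul_le_mul_of_nonneg_left key (sq_nonneg A),
      mul_nonneg (mul_nonneg hE0 hw0) (sq_nonneg A), mul_nonneg hE0 hw0, sq_nonneg A,
      mul_pos hA hA]
  have hB2 : (0:ℝ) < B^2 := by positivity
  rw [show A / B^2 * entH w * ((2/3) * B * t + 2 * A)
    = A * entH w * ((2/3) * B * t + 2 * A) / B^2 by ring, le_div_iff₀ hB2]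
  linarith

/-- Bennett/Bernstein bounds for the Horvitz–Thompson estimator under rejective sampling,
obtained from the negative association property. -/
theorem rejective_na_tail_bound
    {Ω : Type*} [MeasurableSpace Ω] (μ : Measure Ω) [IsProbabilityMeasure μ]
    {N : ℕ} (hN : 1 ≤ N) (n : ℕ) (hn1 : 1 ≤ n) (hnN : n ≤ N)
    (p : Fin N → ℝ) (hp : ∀ i, 0 < p i ∧ p i < 1) (hsum : ∑ i, p i = (n : ℝ))
    (ε : Ω → Fin N → ℝ) (hrej : IsRejective μ n p ε)
    (pii : Fin N → ℝ) (hpii : ∀ i, μ {ω | ε ω i = 1} = ENNReal.ofReal (pii i))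
    (hpii01 : ∀ i, 0 < pii i ∧ pii i ≤ 1)
    (x : Fin N → ℝ) (hx : ∃ i, x i ≠ 0)
    (A B : ℝ)
    (hA : A = ∑ i, ((1 - pii i) / pii i) * x i ^ 2)
    (hB : IsGreatest (Set.range fun i => |x i| / pii i) B)
    (t : ℝ) (ht : 0 ≤ t) :
    μ {ω | ∑ i, (ε ω i / pii i) * x i - ∑ i, x i ≥ t}
        ≤ ENNReal.ofReal (2 * Real.exp (-(A / B ^ 2) * entH (B * t / (2 * A)))) ∧
      2 * Real.exp (-(A / B ^ 2) * entH (B * t / (2 * A)))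
        ≤ 2 * Real.exp (-(t ^ 2 / 4) / ((2 / 3) * B * t + 2 * A)) := by
  classical
  have hNe : Nonempty (Fin N) := ⟨⟨0, by omega⟩⟩
  -- n < N
  have hNlt : n < N := by
    rcases lt_or_eq_of_le hnN with h | h
    · exact h
    · exfalso
      have hlt : ∑ i, p i < ∑ _i : Fin N, (1:ℝ) :=
        Finset.sum_lt_sum_of_nonempty Finset.univ_nonempty (fun i _ => (hp i).2)
      rw [hsum] at hlt
      simp only [Finset.sum_const, Finset.card_univ, Fintype.card_fin, nsmul_eq_mul,
        mul_one] at hlt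
      rw [h] at hlt
      exact lt_irrefl _ hlt
  set r : Fin N → ℝ := fun i => p i / (1 - p i) with hrdef
  have hr : ∀ i, 0 < r i := fun i => div_pos (hp i).1 (by linarith [(hp i).2])
  have hcard : (Finset.univ : Finset (Fin N)).card = N := by simp
  have hncard : n ≤ (Finset.univ : Finset (Fin N)).card := by omega
  have he : 0 < es r Finset.univ n := es_pos hr _ hncard
  set K : Finset (Finset (Fin N)) := Finset.univ.powersetCard n with hKdef
  set q : Finset (Fin N) → ℝ := fun s => (∏ i ∈ s, r i) / es r Finset.univ n with hqdef
  have hq0 : ∀ s, 0 ≤ q s := fun s =>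
    div_nonneg (Finset.prod_nonneg fun i _ => (hr i).le) he.le
  -- weights
  have hC : 0 < ∏ i : Fin N, (1 - p i) :=
    Finset.prod_pos (fun i _ => by linarith [(hp i).2])
  have hwq : ∀ s : Finset (Fin N), rejWeight p s = (∏ i : Fin N, (1 - p i)) * ∏ i ∈ s, r i := by
    intro s
    rw [rejWeight]
    have h1 : ∏ i ∈ s, p i = (∏ i ∈ s, r i) * ∏ i ∈ s, (1 - p i) := by
      rw [← Finset.prod_mul_distrib]
      apply Finset.prod_congr rfl
      intro i _
      rw [hrdef]
      have hne : (1:ℝ) - p i ≠ 0 := ne_of_gt (by linarith [(hp i).2])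
      exact (div_mul_cancel₀ _ hne).symm
    rw [h1, mul_assoc]
    rw [show (sᶜ : Finset (Fin N)) = Finset.univ \ s by rfl]
    rw [show (Finset.univ \ s : Finset (Fin N)) = sᶜ by rfl]
    rw [Finset.prod_mul_prod_compl s (fun i => 1 - p i)]
    ring
  have hW : ∑ u ∈ Finset.univ.filter (fun u : Finset (Fin N) => u.card = n), rejWeight p u
      = (∏ i : Fin N, (1 - p i)) * es r Finset.univ n := by
    have hKf : Finset.univ.filter (fun u : Finset (Fin N) => u.card = n) = K := by
      rw [hKdef]
      ext s
      simp [Finset.mem_powersetCard]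
    rw [hKf, Finset.sum_congr rfl (fun s _ => hwq s), ← Finset.mul_sum]
    rfl
  have hν : ∀ s : Finset (Fin N),
      rejWeight p s / (∑ u ∈ Finset.univ.filter (fun u : Finset (Fin N) => u.card = n),
        rejWeight p u) = q s := by
    intro s
    rw [hwq s, hW, mul_div_mul_left _ _ hC.ne']
  -- atoms
  set As : Finset (Fin N) → Set Ω := fun s => {ω | ∀ i, ε ω i = if i ∈ s then 1 else 0}
    with hAsdef
  have hμAs : ∀ s, μ (As s) = if s.card = n then ENNReal.ofReal (q s) else 0 := by
    intro s
    have h := hrej.2.2 s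
    rw [hν s] at h
    exact h
  have hAs_meas : ∀ s, MeasurableSet (As s) := by
    intro s
    have : As s = ⋂ i, (fun ω => ε ω i) ⁻¹' {if i ∈ s then (1:ℝ) else 0} := by
      ext ω
      simp [hAsdef, Set.mem_iInter, Set.mem_preimage]
    rw [this]
    exact MeasurableSet.iInter (fun i => (hrej.2.1 i) (measurableSet_singleton _))
  have hAs_mem : ∀ ω, ω ∈ As (Finset.univ.filter (fun i => ε ω i = 1)) := by
    intro ω i
    rcases hrej.1 ω i with h | h
    · rw [h, if_neg]
      simp only [Finset.mem_filter, Finset.mem_univ, true_and, h]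
      norm_num
    · rw [h, if_pos]
      simp [Finset.mem_filter, h]
  have hAs_disj : ∀ s u : Finset (Fin N), s ≠ u → Disjoint (As s) (As u) := by
    intro s u hsu
    rw [Set.disjoint_left]
    intro ω hωs hωu
    apply hsu
    ext i
    have h1 := hωs i
    have h2 := hωu i
    by_cases his : i ∈ s <;> by_cases hiu : i ∈ u <;>
      simp [his, hiu] at h1 h2 ⊢ <;> rw [h1] at h2 <;> norm_num at h2
  -- pii formula
  have hpii_eq : ∀ i, pii i = ∑ s ∈ K.filter (fun s => i ∈ s), q s := by
    intro i
    set F : Finset (Finset (Fin N)) :=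
      Finset.univ.filter (fun s : Finset (Fin N) => i ∈ s) with hFdef
    have hset : {ω | ε ω i = 1} = ⋃ s ∈ F, As s := by
      ext ω
      constructor
      · intro hω
        have hmemF : (Finset.univ.filter (fun i => ε ω i = 1)) ∈ F := by
          rw [hFdef]
          simp only [Finset.mem_filter, Finset.mem_univ, true_and]
          exact hω
        exact Set.mem_iUnion.2 ⟨_, Set.mem_iUnion.2 ⟨hmemF, hAs_mem ω⟩⟩
      · intro hω
        simp only [Set.mem_iUnion] at hω
        obtain ⟨s, hs, hωs⟩ := hω
        rw [hFdef] at hs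
        simp only [Finset.mem_filter, Finset.mem_univ, true_and] at hs
        have := hωs i
        rw [if_pos hs] at this
        exact this
    have hm : μ {ω | ε ω i = 1} = ∑ s ∈ F, μ (As s) := by
      rw [hset]
      exact measure_biUnion_finset
        (fun s _ u _ hsu => hAs_disj s u hsu) (fun s _ => hAs_meas s)
    have hm2 : ∑ s ∈ F.filter (fun s => s.card = n), ENNReal.ofReal (q s)
        = ∑ s ∈ F, μ (As s) := by
      rw [Finset.sum_filter]
      exact Finset.sum_congr rfl (fun s _ => (hμAs s).symm)
    have hm3 : F.filter (fun s => s.card = n) = K.filter (fun s => i ∈ s) := by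
      rw [hFdef, hKdef]
      ext s
      simp only [Finset.mem_filter, Finset.mem_univ, true_and, Finset.mem_powersetCard]
      constructor
      · rintro ⟨h1, h2⟩; exact ⟨⟨Finset.subset_univ s, h2⟩, h1⟩
      · rintro ⟨⟨_, h2⟩, h1⟩; exact ⟨h1, h2⟩
    have hm4 : μ {ω | ε ω i = 1}
        = ENNReal.ofReal (∑ s ∈ K.filter (fun s => i ∈ s), q s) := by
      rw [hm, ← hm2, hm3, ENNReal.ofReal_sum_of_nonneg (fun s _ => hq0 s)]
    rw [hpii i] at hm4
    exact (ENNReal.ofReal_eq_ofReal_iff (hpii01 i).1.le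
      (Finset.sum_nonneg fun s _ => hq0 s)).1 hm4
  have hpii_form : ∀ i, pii i = r i * es r (Finset.univ.erase i) (n-1) / es r Finset.univ n := by
    intro i
    rw [hpii_eq i]
    have h1 : K.filter (fun s => i ∈ s) = K.filter (fun s => {i} ⊆ s) := by
      apply Finset.filter_congr
      intro s _
      simp [Finset.singleton_subset_iff]
    rw [h1]
    simp only [hqdef]
    rw [← Finset.sum_div, hKdef, sum_incl {i} (by simpa using hn1)]
    rw [Finset.prod_singleton, Finset.card_singleton,
      show Finset.univ \ {i} = Finset.univ.erase i from (Finset.erase_eq _ _).symm]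
  have hpii_lt1 : ∀ i, pii i < 1 := by
    intro i
    rw [hpii_form i, div_lt_one he]
    have hdec : es r (Finset.univ : Finset (Fin N)) n
        = es r (Finset.univ.erase i) n + r i * es r (Finset.univ.erase i) (n-1) := by
      conv_lhs => rw [show n = (n-1)+1 by omega]
      rw [es_erase (Finset.mem_univ i) (n-1)]
      congr 2
      omega
    have hpos : 0 < es r ((Finset.univ : Finset (Fin N)).erase i) n :=
      es_pos hr _ (by rw [Finset.card_erase_of_mem (Finset.mem_univ i)]; omega)
    linarith [hdec]
  have hpii_pos : ∀ i, 0 < pii i := fun i => (hpii01 i).1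
  have hBmem : ∀ i, |x i| / pii i ≤ B := fun i => hB.2 (Set.mem_range_self i)
  obtain ⟨i0, hi0⟩ := hx
  have hB0 : 0 < B :=
    lt_of_lt_of_le (div_pos (abs_pos.2 hi0) (hpii_pos i0)) (hBmem i0)
  have hA0 : 0 < A := by
    rw [hA]
    apply Finset.sum_pos'
    · intro i _
      apply mul_nonneg (div_nonneg (by linarith [(hpii01 i).2]) (hpii_pos i).le) (sq_nonneg _)
    · refine ⟨i0, Finset.mem_univ i0, ?_⟩
      have hx2 : 0 < x i0 ^ 2 :=
        lt_of_le_of_ne (sq_nonneg _) (Ne.symm (pow_ne_zero 2 hi0))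
      exact mul_pos (div_pos (by linarith [hpii_lt1 i0]) (hpii_pos i0)) hx2
  -- the tail function on samples
  set g : Finset (Fin N) → ℝ :=
    fun s => ∑ i, ((if i ∈ s then (1:ℝ) else 0) / pii i) * x i - ∑ i, x i with hgdef
  -- measure reduction
  have hEv : μ {ω | ∑ i, (ε ω i / pii i) * x i - ∑ i, x i ≥ t}
      ≤ ENNReal.ofReal (∑ s ∈ K.filter (fun s => g s ≥ t), q s) := by
    set H : Finset (Finset (Fin N)) :=
      Finset.univ.filter (fun s : Finset (Fin N) => g s ≥ t) with hHdef
    have hsub : {ω | ∑ i, (ε ω i / pii i) * x i - ∑ i, x i ≥ t} ⊆ ⋃ s ∈ H, As s := by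
      intro ω hω
      have hωa := hAs_mem ω
      have hmemH : (Finset.univ.filter (fun i => ε ω i = 1)) ∈ H := by
        rw [hHdef]
        simp only [Finset.mem_filter, Finset.mem_univ, true_and]
        have hge : g (Finset.univ.filter (fun i => ε ω i = 1))
            = ∑ i, (ε ω i / pii i) * x i - ∑ i, x i := by
          rw [hgdef]
          simp only []
          congr 1
          apply Finset.sum_congr rfl
          intro i _
          rw [← hωa i]
        rw [ge_iff_le, hge]
        exact hω
      exact Set.mem_iUnion.2 ⟨_, Set.mem_iUnion.2 ⟨hmemH, hAs_mem ω⟩⟩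
    calc μ {ω | ∑ i, (ε ω i / pii i) * x i - ∑ i, x i ≥ t}
        ≤ μ (⋃ s ∈ H, As s) := measure_mono hsub
    _ ≤ ∑ s ∈ H, μ (As s) := measure_biUnion_finset_le H As
    _ = ∑ s ∈ H.filter (fun s => s.card = n), ENNReal.ofReal (q s) := by
        have : ∑ s ∈ H.filter (fun s => s.card = n), ENNReal.ofReal (q s)
            = ∑ s ∈ H, μ (As s) := by
          rw [Finset.sum_filter]
          exact Finset.sum_congr rfl (fun s _ => (hμAs s).symm)
        rw [this]
    _ = ENNReal.ofReal (∑ s ∈ K.filter (fun s => g s ≥ t), q s) := by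
        rw [show H.filter (fun s => s.card = n) = K.filter (fun s => g s ≥ t) by
          rw [hHdef, hKdef]
          ext s
          simp only [Finset.mem_filter, Finset.mem_univ, true_and,
            Finset.mem_powersetCard]
          constructor
          · rintro ⟨h1, h2⟩; exact ⟨⟨Finset.subset_univ s, h2⟩, h1⟩
          · rintro ⟨⟨_, h2⟩, h1⟩; exact ⟨h1, h2⟩]
        rw [ENNReal.ofReal_sum_of_nonneg (fun s _ => hq0 s)]
  -- real-side bound
  set c : Fin N → ℝ := fun i => x i / pii i with hcdef
  have hgform : ∀ s, g s = ∑ i, c i * ((if i ∈ s then (1:ℝ) else 0) - pii i) := by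
    intro s
    rw [hgdef]
    simp only []
    rw [← Finset.sum_sub_distrib]
    apply Finset.sum_congr rfl
    intro i _
    rw [hcdef]
    have hne := (hpii_pos i).ne'
    by_cases h : i ∈ s <;> field_simp [h] <;> ring
  set Pos : Finset (Fin N) := Finset.univ.filter (fun i => 0 ≤ x i) with hPosdef
  set Neg : Finset (Fin N) := Finset.univ.filter (fun i => ¬ 0 ≤ x i) with hNegdef
  -- chernoff applications
  have hterm : ∀ i, pii i * (1 - pii i) * (c i)^2 = ((1 - pii i) / pii i) * x i ^ 2 := by
    intro i
    rw [hcdef]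
    have := (hpii_pos i).ne'
    field_simp
  have hvar_all : ∀ (S : Finset (Fin N)), ∑ i ∈ S, pii i * (1 - pii i) * (c i)^2 ≤ A := by
    intro S
    rw [Finset.sum_congr rfl (fun i _ => hterm i), hA]
    apply Finset.sum_le_sum_of_subset_of_nonneg (Finset.subset_univ S)
    intro i _ _
    exact mul_nonneg (div_nonneg (by linarith [(hpii01 i).2]) (hpii_pos i).le) (sq_nonneg _)
  have hch1 := chernoff_abstract K q (fun s _ => hq0 s) pii c Pos
    (fun i s => if i ∈ s then (1:ℝ) else 0)
    (fun i s => by by_cases h : i ∈ s <;> simp [h])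
    A B t hA0 hB0 ht
    (fun i _ => ⟨hpii_pos i, hpii_lt1 i⟩)
    (by
      intro i hi
      rw [hPosdef] at hi
      simp only [Finset.mem_filter, Finset.mem_univ, true_and] at hi
      constructor
      · exact div_nonneg hi (hpii_pos i).le
      · have := hBmem i
        rwa [abs_of_nonneg hi] at this)
    (hvar_all Pos)
    (by
      intro u v hu hv
      have h := mgf_incl hr hn1 hncard Pos u v hu hv
      calc ∑ s ∈ K, q s * ∏ i ∈ Pos, (u i + v i * (if i ∈ s then (1:ℝ) else 0))
          ≤ ∏ i ∈ Pos, (u i + v i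
              * (r i * es r (Finset.univ.erase i) (n-1) / es r Finset.univ n)) := h
      _ = ∏ i ∈ Pos, (u i + v i * pii i) := by
          apply Finset.prod_congr rfl
          intro i _
          rw [hpii_form i])
  have hch2 := chernoff_abstract K q (fun s _ => hq0 s) (fun i => 1 - pii i)
    (fun i => - c i) Neg
    (fun i s => 1 - (if i ∈ s then (1:ℝ) else 0))
    (fun i s => by by_cases h : i ∈ s <;> simp [h])
    A B t hA0 hB0 ht
    (fun i _ => ⟨by show (0:ℝ) < 1 - pii i; linarith [hpii_lt1 i],
      by show (1:ℝ) - pii i < 1; linarith [hpii_pos i]⟩)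
    (by
      intro i hi
      rw [hNegdef] at hi
      simp only [Finset.mem_filter, Finset.mem_univ, true_and] at hi
      push_neg at hi
      constructor
      · rw [hcdef]
        simp only []
        rw [neg_div']
        exact div_nonneg (by linarith) (hpii_pos i).le
      · have := hBmem i
        rw [abs_of_neg hi] at this
        rw [hcdef]
        simp only []
        rw [neg_div']
        exact this
      )
    (by
      have hsq : ∀ i ∈ Neg, (1 - pii i) * (1 - (1 - pii i)) * (- c i)^2
          = pii i * (1 - pii i) * (c i)^2 := by
        intro i _
        ring
      rw [Finset.sum_congr rfl hsq]
      exact hvar_all Neg)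
    (by
      intro u v hu hv
      have h := mgf_excl hr hn1 hncard Neg u v hu hv
      calc ∑ s ∈ K, q s * ∏ i ∈ Neg, (u i + v i * (1 - (if i ∈ s then (1:ℝ) else 0)))
          ≤ ∏ i ∈ Neg, (u i + v i
              * (1 - r i * es r (Finset.univ.erase i) (n-1) / es r Finset.univ n)) := h
      _ = ∏ i ∈ Neg, (u i + v i * (1 - pii i)) := by
          apply Finset.prod_congr rfl
          intro i _
          rw [hpii_form i])
  -- combine the two chernoff bounds
  have hreal : ∑ s ∈ K.filter (fun s => g s ≥ t), q s
      ≤ 2 * Real.exp (-(A / B ^ 2) * entH (B * t / (2 * A))) := by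
    set F1 : Finset (Finset (Fin N)) := K.filter
      (fun s => t/2 ≤ ∑ i ∈ Pos, c i * ((if i ∈ s then (1:ℝ) else 0) - pii i)) with hF1
    set F2 : Finset (Finset (Fin N)) := K.filter
      (fun s => t/2 ≤ ∑ i ∈ Neg, (- c i) * ((1 - (if i ∈ s then (1:ℝ) else 0)) - (1 - pii i)))
      with hF2
    have hss : K.filter (fun s => g s ≥ t) ⊆ F1 ∪ F2 := by
      intro s hs
      rw [Finset.mem_filter] at hs
      rw [Finset.mem_union, hF1, hF2, Finset.mem_filter, Finset.mem_filter]
      by_contra hcon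
      push_neg at hcon
      have h1 := hcon.1 hs.1
      have h2 := hcon.2 hs.1
      have hg := hs.2
      rw [hgform s] at hg
      rw [← Finset.sum_filter_add_sum_filter_not Finset.univ (fun i => 0 ≤ x i)
        (fun i => c i * ((if i ∈ s then (1:ℝ) else 0) - pii i))] at hg
      have hneg_eq : ∑ i ∈ Neg, c i * ((if i ∈ s then (1:ℝ) else 0) - pii i)
          = ∑ i ∈ Neg, (- c i) * ((1 - (if i ∈ s then (1:ℝ) else 0)) - (1 - pii i)) := by
        apply Finset.sum_congr rfl
        intro i _
        ring
      rw [show Finset.univ.filter (fun i => 0 ≤ x i) = Pos from rfl,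
        show Finset.univ.filter (fun i => ¬ 0 ≤ x i) = Neg from rfl, hneg_eq] at hg
      linarith
    calc ∑ s ∈ K.filter (fun s => g s ≥ t), q s
        ≤ ∑ s ∈ F1 ∪ F2, q s :=
          Finset.sum_le_sum_of_subset_of_nonneg hss (fun s _ _ => hq0 s)
    _ ≤ ∑ s ∈ F1, q s + ∑ s ∈ F2, q s := by
          have := Finset.sum_union_inter (s₁ := F1) (s₂ := F2) (f := q)
          have hnn : 0 ≤ ∑ s ∈ F1 ∩ F2, q s := Finset.sum_nonneg fun s _ => hq0 s
          linarith
    _ ≤ Real.exp (-(A/B^2) * entH (B*t/(2*A))) + Real.exp (-(A/B^2) * entH (B*t/(2*A))) :=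
          add_le_add hch1 hch2
    _ = 2 * Real.exp (-(A / B ^ 2) * entH (B * t / (2 * A))) := by ring
  exact ⟨le_trans hEv (ENNReal.ofReal_le_ofReal hreal), part2 hA0 hB0 ht⟩
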